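/- For k ≥ 3 and complete graphs K_{m_1}, …, K_{m_n} with each m_i ≥ k, the pendant tree k-connectivity of the n-dimensional generalized hypercube satisfies τ_k(K_{m_1} □ K_{m_2} □ ⋯ □ K_{m_n}) ≤ (∑_{i=1}^n m_i) − n − k + 2. -/

import Mathlib

open SimpleGraph

/-- `T` is a pendant `S`-Steiner tree in `G`: a subtree of `G` containing `S` in which
every vertex of `S` has degree exactly one. -/
def IsPendantSteinerTree {V : Type*} (G : SimpleGraph V) (S : Set V) (T : G.Subgraph) : Prop :=
  T.coe.IsTree ∧ S ⊆ T.verts ∧ ∀ v ∈ S, (T.neighborSet v).ncard = 1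

/-- Two (pendant) `S`-Steiner trees are internally disjoint: edge-disjoint with
vertex intersection exactly `S`. -/
def InternallyDisjoint {V : Type*} (G : SimpleGraph V) (S : Set V) (T T' : G.Subgraph) : Prop :=
  T.edgeSet ∩ T'.edgeSet = ∅ ∧ T.verts ∩ T'.verts = S

/-- There exist `ℓ` pairwise internally disjoint pendant `S`-Steiner trees in `G`. -/
def HasPendantTrees {V : Type*} (G : SimpleGraph V) (S : Set V) (ℓ : ℕ) : Prop :=
  ∃ T : Fin ℓ → G.Subgraph, (∀ i, IsPendantSteinerTree G S (T i)) ∧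
    ∀ i j, i ≠ j → InternallyDisjoint G S (T i) (T j)

/-- The pendant tree `k`-connectivity `τ_k(G)`: the largest `ℓ` such that every `k`-set of
vertices admits `ℓ` pairwise internally disjoint pendant Steiner trees. -/
noncomputable def pendantConn {V : Type*} (G : SimpleGraph V) (k : ℕ) : ℕ :=
  sSup {ℓ | ∀ S : Finset V, S.card = k → HasPendantTrees G (↑S) ℓ}

/-- The minimum degree of a graph, via neighbour sets. -/
noncomputable def minDeg {V : Type*} (G : SimpleGraph V) : ℕ :=
  sInf (Set.range fun v => (G.neighborSet v).ncard)

/-- `G` is `k`-connected. -/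
def IsKConnected {V : Type*} [Fintype V] (G : SimpleGraph V) (k : ℕ) : Prop :=
  k < Fintype.card V ∧
    ∀ U : Finset V, U.card < k → (G.induce ((↑U : Set V)ᶜ)).Connected

/-- The vertex connectivity `κ(G)`. -/
noncomputable def vertexConn {V : Type*} [Fintype V] (G : SimpleGraph V) : ℕ :=
  sSup {k | IsKConnected G k}

/-- The box (Cartesian) product of a family of graphs. -/
def piBoxProd {n : ℕ} {α : Fin n → Type*} (G : ∀ i, SimpleGraph (α i)) :
    SimpleGraph (∀ i, α i) where
  Adj x y := ∃ j, (G j).Adj (x j) (y j) ∧ ∀ i, i ≠ j → x i = y i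
  symm := by
    constructor
    rintro x y ⟨j, hadj, h⟩
    exact ⟨j, hadj.symm, fun i hi => (h i hi).symm⟩
  loopless := by
    constructor
    rintro x ⟨j, hadj, -⟩
    exact (G j).irrefl hadj

lemma walk_two_leaf {W : Type*} {H : SimpleGraph W} {v u : W}
    (hv : H.neighborSet v = {u}) (hu : H.neighborSet u = {v}) :
    ∀ {x y : W} (p : H.Walk x y), (x = v ∨ x = u) → (y = v ∨ y = u) := by
  intro x y p
  induction p with
  | nil => exact id
  | @cons a b c h q ih =>
    intro ha
    apply ih
    rcases ha with rfl | rfl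
    · right
      have : b ∈ H.neighborSet a := h
      rw [hv] at this; exact this
    · left
      have : b ∈ H.neighborSet a := h
      rw [hu] at this; exact this

lemma two_leaf_false {W : Type*} {H : SimpleGraph W} (hconn : H.Connected) {v u w : W}
    (hv : H.neighborSet v = {u}) (hu : H.neighborSet u = {v})
    (hw1 : w ≠ v) (hw2 : w ≠ u) : False := by
  obtain ⟨p⟩ := hconn.preconnected v w
  rcases walk_two_leaf hv hu p (Or.inl rfl) with h | h
  · exact hw1 h
  · exact hw2 h

lemma nbr_card_le (n : ℕ) (m : Fin n → ℕ) (hn : 1 ≤ n) (hm1 : ∀ i, 1 ≤ m i)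
    (v : ∀ i, Fin (m i)) :
    ((piBoxProd fun i => (⊤ : SimpleGraph (Fin (m i)))).neighborSet v).ncard
      ≤ ∑ i, (m i - 1) := by
  classical
  set G := piBoxProd fun i => (⊤ : SimpleGraph (Fin (m i))) with hG
  set t : Set (Σ j : Fin n, Fin (m j)) := {p | p.2 ≠ v p.1} with ht
  have hcard : t.ncard = ∑ i, (m i - 1) := by
    have : t = ↑((Finset.univ : Finset (Fin n)).sigma fun j => ({v j}ᶜ : Finset (Fin (m j)))) := by
      ext ⟨j, x⟩
      simp [ht]
    rw [this, Set.ncard_coe_finset, Finset.card_sigma]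
    apply Finset.sum_congr rfl
    intro i _
    rw [Finset.card_compl, Finset.card_singleton, Fintype.card_fin]
  rw [← hcard]
  have i0 : Fin n := ⟨0, hn⟩
  set f : (∀ i, Fin (m i)) → (Σ j : Fin n, Fin (m j)) :=
    fun y => if h : G.Adj v y then ⟨Classical.choose h, y (Classical.choose h)⟩
      else ⟨i0, v i0⟩ with hf
  apply Set.ncard_le_ncard_of_injOn f
  · intro y hy
    have hy' : G.Adj v y := hy
    rw [hf]
    simp only [dif_pos hy']
    obtain ⟨hadj, -⟩ := Classical.choose_spec hy'
    simp only [ht, Set.mem_setOf_eq]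
    have hne : v (Classical.choose hy') ≠ y (Classical.choose hy') := by simpa using hadj
    exact fun h => hne h.symm
  · intro y hy z hz hyz
    have hy' : G.Adj v y := hy
    have hz' : G.Adj v z := hz
    rw [hf] at hyz
    simp only [dif_pos hy', dif_pos hz'] at hyz
    obtain ⟨hadjy, hothy⟩ := Classical.choose_spec hy'
    obtain ⟨hadjz, hothz⟩ := Classical.choose_spec hz'
    obtain ⟨h1, h2⟩ := Sigma.mk.inj_iff.mp hyz
    funext i
    by_cases hi : i = Classical.choose hy'
    · subst hi
      rw [← h1] at h2
      exact eq_of_heq h2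
    · rw [← hothy i hi, hothz i (fun h => hi (h.trans h1.symm))]


theorem stmt12 (n k : ℕ) (hn : 1 ≤ n) (hk : 3 ≤ k) (m : Fin n → ℕ) (hm : ∀ i, k ≤ m i) :
    pendantConn (piBoxProd fun i => (⊤ : SimpleGraph (Fin (m i)))) k ≤
      (∑ i, m i) - n - k + 2 := by
  classical
  apply csSup_le'
  rintro ℓ hℓ
  simp only [Set.mem_setOf_eq] at hℓ
  set G := piBoxProd fun i => (⊤ : SimpleGraph (Fin (m i))) with hG
  have hmpos : ∀ i, 0 < m i := fun i => lt_of_lt_of_le (by omega) (hm i)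
  have i0 : Fin n := ⟨0, hn⟩
  set s : Fin k → (∀ i, Fin (m i)) :=
    fun a i => if i = i0 then Fin.castLE (hm i) a else ⟨0, hmpos i⟩ with hs
  have hsi0 : ∀ a : Fin k, s a i0 = Fin.castLE (hm i0) a := fun a => if_pos rfl
  have hsinj : Function.Injective s := by
    intro a b hab
    have h1 := congrFun hab i0
    rw [hsi0, hsi0] at h1
    exact Fin.castLE_injective _ h1
  have hadj : ∀ a b : Fin k, a ≠ b → G.Adj (s a) (s b) := by
    intro a b hab
    refine ⟨i0, ?_, ?_⟩
    · rw [hsi0, hsi0]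
      simp only [top_adj, ne_eq]
      exact fun h => hab (Fin.castLE_injective _ h)
    · intro i hi
      simp only [hs, if_neg hi]
  set S : Finset (∀ i, Fin (m i)) := Finset.image s Finset.univ with hS
  have hScard : S.card = k := by
    rw [hS, Finset.card_image_of_injective _ hsinj, Finset.card_univ, Fintype.card_fin]
  obtain ⟨T, hT, hdisj⟩ := hℓ S hScard
  set a0 : Fin k := ⟨0, by omega⟩ with ha0
  set v := s a0 with hv
  have hvS : v ∈ (S : Set (∀ i, Fin (m i))) := by
    simp only [hS, Finset.coe_image, Set.mem_image]
    exact ⟨a0, by simp, rfl⟩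
  -- unique tree neighbors of v
  have huniq : ∀ i : Fin ℓ, ∃ w, (T i).neighborSet v = {w} :=
    fun i => Set.ncard_eq_one.mp ((hT i).2.2 v hvS)
  choose u hu using huniq
  have huAdj : ∀ i, (T i).Adj v (u i) := by
    intro i
    have : u i ∈ (T i).neighborSet v := by rw [hu i]; rfl
    exact this
  have huG : ∀ i, G.Adj v (u i) := fun i => (T i).adj_sub (huAdj i)
  -- u is injective
  have huinj : Function.Injective u := by
    intro i j hij
    by_contra hne
    have h1 : s(v, u i) ∈ (T i).edgeSet := (huAdj i)
    have h2 : s(v, u i) ∈ (T j).edgeSet := by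
      rw [Subgraph.mem_edgeSet, hij]; exact huAdj j
    have := (hdisj i j hne).1
    exact absurd (Set.mem_inter h1 h2) (by rw [this]; exact Set.notMem_empty _)
  -- u i is not in S
  have huS : ∀ i, u i ∉ (S : Set (∀ j, Fin (m j))) := by
    intro i hui
    have hnu : ((T i).neighborSet (u i)).ncard = 1 := (hT i).2.2 (u i) hui
    obtain ⟨x, hx⟩ := Set.ncard_eq_one.mp hnu
    have hvx : v ∈ (T i).neighborSet (u i) := (huAdj i).symm
    rw [hx] at hvx
    have hxv : x = v := hvx.symm
    subst hxv
    -- third vertex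
    have hvne : v ≠ u i := (huG i).ne
    obtain ⟨w, hwS, hwv, hwu⟩ : ∃ w ∈ S, w ≠ v ∧ w ≠ u i := by
      have h2 : (S.erase v).card = k - 1 := by
        rw [Finset.card_erase_of_mem (by exact_mod_cast hvS), hScard]
      have h3 : k - 2 ≤ ((S.erase v).erase (u i)).card := by
        calc k - 2 = (S.erase v).card - 1 := by omega
        _ ≤ _ := Finset.pred_card_le_card_erase
      obtain ⟨w, hw⟩ := Finset.card_pos.mp (lt_of_lt_of_le (show 0 < k - 2 by omega) h3)
      refine ⟨w, ?_, ?_, ?_⟩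
      · exact Finset.mem_of_mem_erase (Finset.mem_of_mem_erase hw)
      · exact Finset.ne_of_mem_erase (Finset.mem_of_mem_erase hw)
      · exact Finset.ne_of_mem_erase hw
    -- apply two_leaf lemma on (T i).coe
    have hvT : v ∈ (T i).verts := (hT i).2.1 hvS
    have huT : u i ∈ (T i).verts := (huAdj i).snd_mem
    have hwT : w ∈ (T i).verts := (hT i).2.1 hwS
    refine two_leaf_false (hT i).1.isConnected (v := ⟨v, hvT⟩) (u := ⟨u i, huT⟩)
      (w := ⟨w, hwT⟩) ?_ ?_ ?_ ?_
    · ext ⟨x, hxT⟩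
      simp only [SimpleGraph.mem_neighborSet, Subgraph.coe_adj, Set.mem_singleton_iff,
        Subtype.mk.injEq]
      constructor
      · intro h
        have : x ∈ (T i).neighborSet v := h
        rw [hu i] at this; exact this
      · rintro rfl; exact huAdj i
    · ext ⟨x, hxT⟩
      simp only [SimpleGraph.mem_neighborSet, Subgraph.coe_adj, Set.mem_singleton_iff,
        Subtype.mk.injEq]
      constructor
      · intro h
        have : x ∈ (T i).neighborSet (u i) := h
        rw [hx] at this; exact this
      · rintro rfl; exact (huAdj i).symm
    · exact fun h => hwv (congrArg Subtype.val h)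
    · exact fun h => hwu (congrArg Subtype.val h)
  -- the counting
  set W : Set (∀ i, Fin (m i)) := Set.range u ∪ ((S : Set _) \ {v}) with hW
  have hWsub : W ⊆ G.neighborSet v := by
    rintro x (⟨i, rfl⟩ | ⟨hxS, hxv⟩)
    · exact huG i
    · obtain ⟨b, -, rfl⟩ := Finset.mem_image.mp (by exact_mod_cast hxS)
      have hab : a0 ≠ b := fun h => hxv (show s b = v by rw [hv, h])
      exact hadj a0 b hab
  have hWcard : W.ncard = ℓ + (k - 1) := by
    rw [hW, Set.ncard_union_eq]
    · congr 1
      · rw [← Set.image_univ, Set.ncard_image_of_injective _ huinj, Set.ncard_univ,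
          Nat.card_eq_fintype_card, Fintype.card_fin]
      · rw [Set.ncard_diff_singleton_of_mem hvS, Set.ncard_coe_finset, hScard]
    · rw [Set.disjoint_left]
      rintro x ⟨i, rfl⟩ ⟨hxS, -⟩
      exact huS i hxS
  have hle : W.ncard ≤ (G.neighborSet v).ncard := Set.ncard_le_ncard hWsub
  have hub : (G.neighborSet v).ncard ≤ ∑ i, (m i - 1) :=
    nbr_card_le n m hn (fun i => hmpos i) v
  have hsum : ∑ i, m i = (∑ i, (m i - 1)) + n := by
    have h1 : ∑ i, m i = ∑ i : Fin n, ((m i - 1) + 1) :=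
      Finset.sum_congr rfl fun i _ => by have := hmpos i; omega
    rw [h1, Finset.sum_add_distrib, Finset.sum_const, Finset.card_univ, Fintype.card_fin,
      smul_eq_mul, mul_one]
  have key : ℓ + (k - 1) ≤ ∑ i, (m i - 1) := by rw [← hWcard]; exact le_trans hle hub
  rw [hsum]
  omega
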